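/- For |q|<1 and parameters in the region of validity (a ≠ q^{-1}, x ≠ 0), the series ₁φ₁ satisfies the recurrence with unshifted argument: ₁φ₁(aq²; cq²; q, x) = [(1−cq)((1−c)q + x) / ((1−aq)x)] · ₁φ₁(aq; cq; q, x) − [(1−c)(1−cq)q / ((1−aq)x)] · ₁φ₁(a; c; q, x). -/

import Mathlib

open scoped BigOperators

/-- q-shifted factorial (a;q)_j -/
noncomputable def qPoch (a q : ℂ) (j : ℕ) : ℂ :=
  ∏ i ∈ Finset.range j, (1 - a * q ^ i)

/-- infinite q-shifted factorial (a;q)_∞ -/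
noncomputable def qPochInf (a q : ℂ) : ℂ :=
  ∏' j : ℕ, (1 - a * q ^ j)

/-- basic hypergeometric series ₁φ₁(a; c; q, x) -/
noncomputable def phi11 (a c q x : ℂ) : ℂ :=
  ∑' j : ℕ, qPoch a q j / (qPoch q q j * qPoch c q j) *
    (-1) ^ j * q ^ (j * (j - 1) / 2) * x ^ j

/-- basic hypergeometric series ₀φ₁(–; c; q, x) -/
noncomputable def phi01 (c q x : ℂ) : ℂ :=
  ∑' j : ℕ, q ^ (j * (j - 1)) * x ^ j / (qPoch q q j * qPoch c q j)

/-- basic hypergeometric series ₂φ₁(a, b; c; q, x) -/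
noncomputable def phi21 (a b c q x : ℂ) : ℂ :=
  ∑' j : ℕ, qPoch a q j * qPoch b q j / (qPoch q q j * qPoch c q j) * x ^ j

noncomputable def myT (a c q x : ℂ) (j : ℕ) : ℂ :=
  qPoch a q j / (qPoch q q j * qPoch c q j) * (-1) ^ j * q ^ (j * (j - 1) / 2) * x ^ j

lemma phi11_eq (a c q x : ℂ) : phi11 a c q x = ∑' j, myT a c q x j := rfl

lemma qPoch_succ (a q : ℂ) (j : ℕ) :
    qPoch a q (j + 1) = qPoch a q j * (1 - a * q ^ j) := Finset.prod_range_succ _ _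

lemma qPoch_succ' (a q : ℂ) (j : ℕ) :
    qPoch a q (j + 1) = (1 - a) * qPoch (a * q) q j := by
  rw [qPoch, Finset.prod_range_succ']
  simp [qPoch, mul_comm, pow_succ, mul_assoc, mul_left_comm]

lemma one_sub_ne (z : ℂ) (h : ‖z‖ < 1) : (1 : ℂ) - z ≠ 0 := by
  intro h0
  have : z = 1 := by linear_combination -h0
  rw [this] at h; simp at h

lemma qPoch_q_ne (q : ℂ) (hq : ‖q‖ < 1) (j : ℕ) : qPoch q q j ≠ 0 := by
  rw [qPoch]
  apply Finset.prod_ne_zero_iff.2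
  intro i _
  have : ‖q * q ^ i‖ < 1 := by
    rw [norm_mul, norm_pow]
    calc ‖q‖ * ‖q‖ ^ i ≤ ‖q‖ * 1 := by
          apply mul_le_mul_of_nonneg_left _ (norm_nonneg q)
          exact pow_le_one₀ (norm_nonneg q) hq.le
      _ < 1 := by simpa using hq
  exact one_sub_ne _ this

lemma qPoch_c_ne (c q : ℂ) (hc : ∀ n : ℕ, c * q ^ n ≠ 1) (j : ℕ) : qPoch c q j ≠ 0 := by
  rw [qPoch]
  apply Finset.prod_ne_zero_iff.2
  intro i _
  intro h0
  exact hc i (by linear_combination -h0)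

lemma tri (j : ℕ) : (j + 1) * ((j + 1) - 1) / 2 = j * (j - 1) / 2 + j := by
  have h1 : (j + 1) * ((j + 1) - 1) = j * (j - 1) + j * 2 := by
    cases j with
    | zero => rfl
    | succ k => simp [Nat.succ_sub_one]; ring
  rw [h1, Nat.add_mul_div_right _ _ (by norm_num : 0 < 2)]

lemma myT_succ (a c q x : ℂ) (hq : ‖q‖ < 1) (hc : ∀ n : ℕ, c * q ^ n ≠ 1) (j : ℕ) :
    myT a c q x (j + 1) =
      myT a c q x j * ((1 - a * q ^ j) * (-(q ^ j * x)) / ((1 - q * q ^ j) * (1 - c * q ^ j))) := by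
  have hQ := qPoch_q_ne q hq j
  have hC := qPoch_c_ne c q hc j
  have hq1 : (1 : ℂ) - q * q ^ j ≠ 0 := by
    have := qPoch_q_ne q hq (j + 1)
    rw [qPoch_succ] at this
    exact right_ne_zero_of_mul this
  have hc1 : (1 : ℂ) - c * q ^ j ≠ 0 := fun h => hc j (by linear_combination -h)
  rw [myT, myT, qPoch_succ, qPoch_succ, qPoch_succ, tri, pow_add, pow_succ, pow_succ]
  field_simp
  ring

lemma myT_summable (a c q x : ℂ) (hq : ‖q‖ < 1) (hc : ∀ n : ℕ, c * q ^ n ≠ 1) :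
    Summable (myT a c q x) := by
  apply summable_of_ratio_norm_eventually_le (r := 1 / 2) (by norm_num)
  have h0 : Filter.Tendsto (fun j : ℕ => (q : ℂ) ^ j) Filter.atTop (nhds 0) :=
    tendsto_pow_atTop_nhds_zero_of_norm_lt_one hq
  have hA : Filter.Tendsto
      (fun j : ℕ => (1 - a * q ^ j) * (-(q ^ j * x)) / ((1 - q * q ^ j) * (1 - c * q ^ j)))
      Filter.atTop (nhds ((1 - a * 0) * (-(0 * x)) / ((1 - q * 0) * (1 - c * 0)))) := by
    apply Filter.Tendsto.div
    · exact (tendsto_const_nhds.sub (h0.const_mul a)).mul (h0.mul_const x).neg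
    · exact (tendsto_const_nhds.sub (h0.const_mul q)).mul (tendsto_const_nhds.sub (h0.const_mul c))
    · norm_num
  simp only [mul_zero, zero_mul, neg_zero, sub_zero, mul_one, one_mul, div_one] at hA
  have hN : Filter.Tendsto
      (fun j : ℕ => ‖(1 - a * q ^ j) * (-(q ^ j * x)) / ((1 - q * q ^ j) * (1 - c * q ^ j))‖)
      Filter.atTop (nhds 0) := by
    simpa using hA.norm
  filter_upwards [hN.eventually_le_const (by norm_num : (0 : ℝ) < 1 / 2)] with j hj
  rw [myT_succ a c q x hq hc j, norm_mul]
  calc ‖myT a c q x j‖ * ‖(1 - a * q ^ j) * (-(q ^ j * x)) / ((1 - q * q ^ j) * (1 - c * q ^ j))‖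
      ≤ ‖myT a c q x j‖ * (1 / 2) :=
        mul_le_mul_of_nonneg_left hj (norm_nonneg _)
    _ = 1 / 2 * ‖myT a c q x j‖ := by ring

lemma key_id (q a c x : ℂ) (hq : ‖q‖ < 1) (hc : ∀ n : ℕ, c * q ^ n ≠ 1)
    (ha : a * q ≠ 1) (j : ℕ) :
    (1 - c * q) * (1 - c) * q * myT (a * q) (c * q) q x (j + 1)
      - (1 - c) * (1 - c * q) * q * myT a c q x (j + 1)
    = (1 - a * q) * x * myT (a * q ^ 2) (c * q ^ 2) q x j
      - (1 - c * q) * x * myT (a * q) (c * q) q x j := by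
  have haq : (1 : ℂ) - a * q ≠ 0 := fun h => ha (by linear_combination -h)
  have hcq : (1 : ℂ) - c * q ≠ 0 := fun h => hc 1 (by rw [pow_one]; linear_combination -h)
  have hc0 : (1 : ℂ) - c ≠ 0 := fun h => hc 0 (by rw [pow_zero, mul_one]; linear_combination -h)
  have hQ := qPoch_q_ne q hq j
  have hE : (1 : ℂ) - q * q ^ j ≠ 0 := by
    have := qPoch_q_ne q hq (j + 1); rw [qPoch_succ] at this
    exact right_ne_zero_of_mul this
  have hc' : ∀ n : ℕ, c * q * q ^ n ≠ 1 := fun n h =>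
    hc (n + 1) (by rw [pow_succ']; linear_combination h)
  have hc'' : ∀ n : ℕ, c * q ^ 2 * q ^ n ≠ 1 := fun n h =>
    hc (n + 2) (by rw [pow_add]; linear_combination h)
  have hC1 := qPoch_c_ne (c * q) q hc' j
  have hC2 := qPoch_c_ne (c * q ^ 2) q hc'' j
  have e2 : a * q * q = a * q ^ 2 := by ring
  have f2 : c * q * q = c * q ^ 2 := by ring
  have relA : (1 - a * q) * qPoch (a * q ^ 2) q j
      = qPoch (a * q) q j * (1 - a * (q * q ^ j)) := by
    rw [← e2, ← qPoch_succ', qPoch_succ]; ring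
  have relC : (1 - c * q) * qPoch (c * q ^ 2) q j
      = qPoch (c * q) q j * (1 - c * (q * q ^ j)) := by
    rw [← f2, ← qPoch_succ', qPoch_succ]; ring
  have h1 : myT (a * q) (c * q) q x (j + 1)
      = (1 - a * q) * qPoch (a * q ^ 2) q j *
          (-((-1) ^ j * q ^ (j * (j - 1) / 2) * x ^ j * q ^ j * x)) /
        ((qPoch q q j * (1 - q * q ^ j)) * ((1 - c * q) * qPoch (c * q ^ 2) q j)) := by
    rw [myT, qPoch_succ' (a * q) q j, e2, qPoch_succ q q j, qPoch_succ' (c * q) q j, f2,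
      tri, pow_add, pow_succ x j]
    ring
  have h2 : myT a c q x (j + 1)
      = (1 - a) * qPoch (a * q) q j *
          (-((-1) ^ j * q ^ (j * (j - 1) / 2) * x ^ j * q ^ j * x)) /
        ((qPoch q q j * (1 - q * q ^ j)) * ((1 - c) * qPoch (c * q) q j)) := by
    rw [myT, qPoch_succ' a q j, qPoch_succ q q j, qPoch_succ' c q j,
      tri, pow_add, pow_succ x j]
    ring
  have h3 : myT (a * q ^ 2) (c * q ^ 2) q x j
      = qPoch (a * q ^ 2) q j * ((-1) ^ j * q ^ (j * (j - 1) / 2) * x ^ j) /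
        (qPoch q q j * qPoch (c * q ^ 2) q j) := by
    rw [myT]; ring
  have h4 : myT (a * q) (c * q) q x j
      = qPoch (a * q) q j * ((-1) ^ j * q ^ (j * (j - 1) / 2) * x ^ j) /
        (qPoch q q j * qPoch (c * q) q j) := by
    rw [myT]; ring
  rw [h1, h2, h3, h4]
  have hW : qPoch q q j * (1 - q * q ^ j) * qPoch (c * q) q j * qPoch (c * q ^ 2) q j ≠ 0 :=
    mul_ne_zero (mul_ne_zero (mul_ne_zero hQ hE) hC1) hC2
  apply mul_left_cancel₀ hW
  have hL : qPoch q q j * (1 - q * q ^ j) * qPoch (c * q) q j * qPoch (c * q ^ 2) q j *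
      ((1 - c * q) * (1 - c) * q *
          ((1 - a * q) * qPoch (a * q ^ 2) q j *
              (-((-1) ^ j * q ^ (j * (j - 1) / 2) * x ^ j * q ^ j * x)) /
            ((qPoch q q j * (1 - q * q ^ j)) * ((1 - c * q) * qPoch (c * q ^ 2) q j)))
        - (1 - c) * (1 - c * q) * q *
          ((1 - a) * qPoch (a * q) q j *
              (-((-1) ^ j * q ^ (j * (j - 1) / 2) * x ^ j * q ^ j * x)) /
            ((qPoch q q j * (1 - q * q ^ j)) * ((1 - c) * qPoch (c * q) q j))))
      = -(1 - c) * q * (1 - a * q) * qPoch (a * q ^ 2) q j * qPoch (c * q) q j *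
            ((-1) ^ j * q ^ (j * (j - 1) / 2) * x ^ j) * q ^ j * x
        + (1 - c * q) * q * (1 - a) * qPoch (a * q) q j * qPoch (c * q ^ 2) q j *
            ((-1) ^ j * q ^ (j * (j - 1) / 2) * x ^ j) * q ^ j * x := by
    generalize qPoch q q j = P0 at hQ ⊢
    generalize qPoch (c * q) q j = C1 at hC1 ⊢
    generalize qPoch (c * q ^ 2) q j = C2 at hC2 ⊢
    generalize qPoch (a * q) q j = A1
    generalize qPoch (a * q ^ 2) q j = A2
    field_simp
    rw [div_eq_iff (show (1 : ℂ) - q * c ≠ 0 by rwa [mul_comm])]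
    ring
  have hR : qPoch q q j * (1 - q * q ^ j) * qPoch (c * q) q j * qPoch (c * q ^ 2) q j *
      ((1 - a * q) * x *
          (qPoch (a * q ^ 2) q j * ((-1) ^ j * q ^ (j * (j - 1) / 2) * x ^ j) /
            (qPoch q q j * qPoch (c * q ^ 2) q j))
        - (1 - c * q) * x *
          (qPoch (a * q) q j * ((-1) ^ j * q ^ (j * (j - 1) / 2) * x ^ j) /
            (qPoch q q j * qPoch (c * q) q j)))
      = (1 - a * q) * x * qPoch (a * q ^ 2) q j * ((-1) ^ j * q ^ (j * (j - 1) / 2) * x ^ j) *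
            (1 - q * q ^ j) * qPoch (c * q) q j
        - (1 - c * q) * x * qPoch (a * q) q j * ((-1) ^ j * q ^ (j * (j - 1) / 2) * x ^ j) *
            (1 - q * q ^ j) * qPoch (c * q ^ 2) q j := by
    generalize qPoch q q j = P0 at hQ ⊢
    generalize qPoch (c * q) q j = C1 at hC1 ⊢
    generalize qPoch (c * q ^ 2) q j = C2 at hC2 ⊢
    generalize qPoch (a * q) q j = A1
    generalize qPoch (a * q ^ 2) q j = A2
    field_simp
  rw [hL, hR]
  linear_combination
    (((-1) ^ j * q ^ (j * (j - 1) / 2) * x ^ j) * x * qPoch (c * q) q j *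
        (-(1 - c) * q * q ^ j - (1 - q * q ^ j))) * relA
    + (((-1) ^ j * q ^ (j * (j - 1) / 2) * x ^ j) * x * qPoch (a * q) q j *
        (q * (1 - a) * q ^ j + (1 - q * q ^ j))) * relC

theorem phi11_three_term_recurrence_220 (q a c x : ℂ) (hq : ‖q‖ < 1)
    (hc : ∀ n : ℕ, c * q ^ n ≠ 1)
    (ha : a * q ≠ 1) (hx : x ≠ 0) :
    phi11 (a * q ^ 2) (c * q ^ 2) q x
      = (1 - c * q) * ((1 - c) * q + x) / ((1 - a * q) * x)
          * phi11 (a * q) (c * q) q x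
        - (1 - c) * (1 - c * q) * q / ((1 - a * q) * x)
          * phi11 a c q x := by
  have haq : (1 : ℂ) - a * q ≠ 0 := fun h => ha (by linear_combination -h)
  have hc' : ∀ n : ℕ, c * q * q ^ n ≠ 1 := fun n h =>
    hc (n + 1) (by rw [pow_succ']; linear_combination h)
  have hc'' : ∀ n : ℕ, c * q ^ 2 * q ^ n ≠ 1 := fun n h =>
    hc (n + 2) (by rw [pow_add]; linear_combination h)
  have S0 := myT_summable a c q x hq hc
  have S1 := myT_summable (a * q) (c * q) q x hq hc'
  have S2 := myT_summable (a * q ^ 2) (c * q ^ 2) q x hq hc''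
  have M : (1 - c * q) * ((1 - c) * q + x) * phi11 (a * q) (c * q) q x
      - (1 - c) * (1 - c * q) * q * phi11 a c q x
      = (1 - a * q) * x * phi11 (a * q ^ 2) (c * q ^ 2) q x := by
    rw [phi11_eq, phi11_eq, phi11_eq, ← tsum_mul_left, ← tsum_mul_left, ← tsum_mul_left,
      ← (S1.mul_left _).tsum_sub (S0.mul_left _)]
    have split : ∀ j : ℕ,
        (1 - c * q) * ((1 - c) * q + x) * myT (a * q) (c * q) q x j
          - (1 - c) * (1 - c * q) * q * myT a c q x j
        = ((1 - c * q) * (1 - c) * q * myT (a * q) (c * q) q x j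
            - (1 - c) * (1 - c * q) * q * myT a c q x j)
          + (1 - c * q) * x * myT (a * q) (c * q) q x j := fun j => by ring
    rw [tsum_congr split]
    have Sg : Summable (fun j => (1 - c * q) * (1 - c) * q * myT (a * q) (c * q) q x j
        - (1 - c) * (1 - c * q) * q * myT a c q x j) :=
      (S1.mul_left _).sub (S0.mul_left _)
    rw [Sg.tsum_add (S1.mul_left _), Sg.tsum_eq_zero_add]
    have g0 : (1 - c * q) * (1 - c) * q * myT (a * q) (c * q) q x 0
        - (1 - c) * (1 - c * q) * q * myT a c q x 0 = 0 := by
      simp [myT, qPoch]; ring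
    rw [g0, tsum_congr (fun j => key_id q a c x hq hc ha j), zero_add,
      (S2.mul_left _).tsum_sub (S1.mul_left _), tsum_mul_left, tsum_mul_left]
    ring
  rw [phi11_eq, phi11_eq, phi11_eq] at M ⊢
  generalize (∑' j, myT (a * q ^ 2) (c * q ^ 2) q x j) = T2 at M ⊢
  generalize (∑' j, myT (a * q) (c * q) q x j) = T1 at M ⊢
  generalize (∑' j, myT a c q x j) = T0 at M ⊢
  rw [div_mul_eq_mul_div, div_mul_eq_mul_div, ← sub_div, eq_div_iff (mul_ne_zero haq hx)]
  linear_combination -M
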